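/- Let H be a complex Banach space, Ω ⊆ ℂ an open connected set, and A : Ω → L(H, H) an analytic family of bounded operators such that for every z ∈ Ω the kernel of A(z) and the quotient H / range A(z) are finite dimensional. If A(z₀) is bijective for some z₀ ∈ Ω, then the set of z ∈ Ω at which A(z) fails to be bijective is discrete in Ω, and the function z ↦ A(z)⁻¹ (defined as the inverse in the Banach algebra L(H, H) where it exists, and 0 elsewhere) is meromorphic on Ω. -/

import Mathlib

open ContinuousLinearMap Function Filter

section helpers

variable {E F G E' : Type*}
  [NormedAddCommGroup E] [NormedSpace ℂ E]
  [NormedAddCommGroup F] [NormedSpace ℂ F]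
  [NormedAddCommGroup G] [NormedSpace ℂ G]
  [NormedAddCommGroup E'] [NormedSpace ℂ E']

lemma myclm_comp {f : ℂ → F →L[ℂ] G} {g : ℂ → E →L[ℂ] F} {z : ℂ}
    (hf : AnalyticAt ℂ f z) (hg : AnalyticAt ℂ g z) :
    AnalyticAt ℂ (fun w => (f w).comp (g w)) z := by
  have h : AnalyticAt ℂ (fun p : (F →L[ℂ] G) × (E →L[ℂ] F) => p.1.comp p.2) (f z, g z) := by
    simpa using (ContinuousLinearMap.compL ℂ E F G).analyticAt_bilinear (f z, g z)
  have h2 : AnalyticAt ℂ ((fun p : (F →L[ℂ] G) × (E →L[ℂ] F) => p.1.comp p.2) ∘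
      (fun w => (f w, g w))) z :=
    AnalyticAt.comp (g := fun p : (F →L[ℂ] G) × (E →L[ℂ] F) => p.1.comp p.2)
      (f := fun w => (f w, g w)) h (hf.prod hg)
  exact h2

lemma mycomp_clm (Φ : E →L[ℂ] F) {f : ℂ → E} {z : ℂ} (hf : AnalyticAt ℂ f z) :
    AnalyticAt ℂ (fun w => Φ (f w)) z :=
  (Φ.analyticAt (f z)).comp hf

lemma myclm_apply {f : ℂ → E →L[ℂ] F} {z : ℂ} (hf : AnalyticAt ℂ f z) (v : E) :
    AnalyticAt ℂ (fun w => f w v) z := by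
  exact mycomp_clm (ContinuousLinearMap.apply ℂ F v) hf

lemma my_isUnit_iff_bijective {H : Type*} [NormedAddCommGroup H] [NormedSpace ℂ H]
    [CompleteSpace H] {f : H →L[ℂ] H} : IsUnit f ↔ Function.Bijective f := by
  constructor
  · rintro ⟨u, rfl⟩
    refine Function.bijective_iff_has_inverse.2 ⟨(↑u⁻¹ : H →L[ℂ] H), fun x => ?_, fun x => ?_⟩
    · show (↑u⁻¹ : H →L[ℂ] H) ((u : H →L[ℂ] H) x) = x
      rw [← ContinuousLinearMap.mul_apply, u.inv_mul, ContinuousLinearMap.one_apply]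
    · show (↑u : H →L[ℂ] H) ((↑u⁻¹ : H →L[ℂ] H) x) = x
      rw [← ContinuousLinearMap.mul_apply, u.mul_inv, ContinuousLinearMap.one_apply]
  · intro hf
    let e := ContinuousLinearEquiv.ofBijective f (LinearMap.ker_eq_bot.mpr hf.injective)
      (LinearMap.range_eq_top.mpr hf.surjective)
    refine ⟨⟨f, (e.symm : H →L[ℂ] H), ?_, ?_⟩, rfl⟩
    · ext x
      show f (e.symm x) = x
      exact e.apply_symm_apply x
    · ext x
      show e.symm (f x) = x
      exact e.symm_apply_apply x

lemma my_analyticAt_det {n : Type*} [Fintype n] [DecidableEq n]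
    {M : ℂ → Matrix n n ℂ} {z : ℂ}
    (h : ∀ i j, AnalyticAt ℂ (fun w => M w i j) z) :
    AnalyticAt ℂ (fun w => (M w).det) z := by
  simp only [Matrix.det_apply']
  exact Finset.analyticAt_fun_sum _ fun (σ : Equiv.Perm n) _ =>
    analyticAt_const.mul (Finset.analyticAt_fun_prod _ fun i _ => h (σ i) i)

end helpers
section local_lemma

open Submodule

variable {H : Type*} [NormedAddCommGroup H] [NormedSpace ℂ H] [CompleteSpace H]

set_option maxHeartbeats 2000000 in
lemma localFredholm (A : ℂ → H →L[ℂ] H) (z₁ : ℂ) (hA : AnalyticAt ℂ A z₁)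
    (hk : FiniteDimensional ℂ (LinearMap.ker (A z₁ : H →ₗ[ℂ] H)))
    (hc : FiniteDimensional ℂ (H ⧸ LinearMap.range (A z₁ : H →ₗ[ℂ] H))) :
    (∀ᶠ w in nhds z₁, ¬ Function.Bijective (A w)) ∨
    ((∀ᶠ w in nhdsWithin z₁ {z₁}ᶜ, Function.Bijective (A w)) ∧
      MeromorphicAt (fun z => Ring.inverse (A z)) z₁) := by
  classical
  set K : Submodule ℂ H := LinearMap.ker (A z₁ : H →ₗ[ℂ] H) with hK
  obtain ⟨π, hπ⟩ := Submodule.ClosedComplemented.of_finiteDimensional K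
  obtain ⟨N, hN⟩ := Submodule.exists_isCompl (LinearMap.range (A z₁ : H →ₗ[ℂ] H))
  haveI : FiniteDimensional ℂ N :=
    (Submodule.quotientEquivOfIsCompl _ _ hN).finiteDimensional
  -- the bordered operator
  set T : ℂ → (H × N) →L[ℂ] (H × K) := fun z =>
    (ContinuousLinearMap.inl ℂ H K).comp ((A z).comp (ContinuousLinearMap.fst ℂ H N)) +
      ((N.subtypeL.comp (ContinuousLinearMap.snd ℂ H N)).prod
        (π.comp (ContinuousLinearMap.fst ℂ H N))) with hT
  have hTapply : ∀ z (x : H) (n : N), T z (x, n) = (A z x + ↑n, π x) := by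
    intro z x n
    simp [hT, Prod.ext_iff]
  have hTan : AnalyticAt ℂ T z₁ := by
    apply AnalyticAt.add
    · exact myclm_comp analyticAt_const (myclm_comp hA analyticAt_const)
    · exact analyticAt_const
  -- T z₁ is bijective
  have hTinj : LinearMap.ker (T z₁ : (H × N) →ₗ[ℂ] (H × K)) = ⊥ := by
    rw [LinearMap.ker_eq_bot]
    show Function.Injective (T z₁)
    rw [injective_iff_map_eq_zero]
    rintro ⟨x, n⟩ h0
    rw [hTapply, Prod.mk_eq_zero] at h0
    obtain ⟨h1, h2⟩ := h0
    have hAx : A z₁ x = 0 := by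
      refine (Submodule.disjoint_def.1 hN.disjoint) _ ⟨x, rfl⟩ ?_
      rw [eq_neg_of_add_eq_zero_left h1]
      exact neg_mem n.2
    have hn : (n : H) = 0 := by
      rw [hAx, zero_add] at h1
      exact h1
    have hxK : x ∈ K := by
      rw [hK, LinearMap.mem_ker]
      exact hAx
    have hx0 : x = 0 := by
      have hxx : (⟨x, hxK⟩ : K) = 0 := by
        rw [← hπ ⟨x, hxK⟩]
        exact h2
      exact congrArg Subtype.val hxx
    rw [Prod.mk_eq_zero]
    exact ⟨hx0, by exact_mod_cast hn⟩
  have hTsurj : LinearMap.range (T z₁ : (H × N) →ₗ[ℂ] (H × K)) = ⊤ := by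
    rw [LinearMap.range_eq_top]
    show Function.Surjective (T z₁)
    rintro ⟨y, k⟩
    have hy : y ∈ LinearMap.range (A z₁ : H →ₗ[ℂ] H) ⊔ N := by
      rw [hN.sup_eq_top]; trivial
    obtain ⟨r, hr, nn, hnn, hrny⟩ := Submodule.mem_sup.1 hy
    obtain ⟨x₀, hx₀⟩ := hr
    set c : K := k - π x₀ with hcdef
    refine ⟨(x₀ + ↑c, ⟨nn, hnn⟩), ?_⟩
    rw [hTapply, Prod.mk.injEq]
    constructor
    · have hcker : A z₁ (↑c : H) = 0 := c.2
      rw [map_add, hcker, add_zero]; have hx₀' : A z₁ x₀ = r := hx₀; rw [hx₀']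
      exact hrny
    · rw [map_add, hπ c, hcdef]
      abel
  set e : (H × N) ≃L[ℂ] (H × K) := ContinuousLinearEquiv.ofBijective (T z₁) hTinj hTsurj
    with he
  set u : ℂ → (H × K) →L[ℂ] (H × K) := fun z =>
    (T z).comp (e.symm : (H × K) →L[ℂ] (H × N)) with hu
  have hu1 : u z₁ = 1 := by
    apply ContinuousLinearMap.ext
    intro q
    show T z₁ (e.symm q) = q
    exact e.apply_symm_apply q
  have huan : AnalyticAt ℂ u z₁ := myclm_comp hTan analyticAt_const
  have hevunit : ∀ᶠ z in nhds z₁, IsUnit (u z) := by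
    have hopen : IsOpen {B : (H × K) →L[ℂ] (H × K) | IsUnit B} := Units.isOpen (R := (H × K) →L[ℂ] (H × K))
    have hmem : {B : (H × K) →L[ℂ] (H × K) | IsUnit B} ∈ nhds (u z₁) := by
      apply hopen.mem_nhds
      rw [hu1]
      exact isUnit_one
    exact huan.continuousAt.preimage_mem_nhds hmem
  set Binv : ℂ → (H × K) →L[ℂ] (H × N) := fun z =>
    (e.symm : (H × K) →L[ℂ] (H × N)).comp (Ring.inverse (u z)) with hBinv
  have hBinvan : AnalyticAt ℂ Binv z₁ := by
    apply myclm_comp analyticAt_const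
    have h1 : AnalyticAt ℂ Ring.inverse (u z₁) := by
      rw [hu1]
      simpa using analyticAt_inverse (𝕜 := ℂ) (A := (H × K) →L[ℂ] (H × K)) 1
    exact AnalyticAt.comp (g := Ring.inverse) (f := u) h1 huan
  -- inverse identities
  have hTB : ∀ z, IsUnit (u z) → ∀ q : H × K, T z (Binv z q) = q := by
    intro z hz q
    show T z (e.symm (Ring.inverse (u z) q)) = q
    have : T z (e.symm (Ring.inverse (u z) q)) = u z (Ring.inverse (u z) q) := rfl
    rw [this, ← ContinuousLinearMap.mul_apply, Ring.mul_inverse_cancel _ hz,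
      ContinuousLinearMap.one_apply]
  have hBT : ∀ z, IsUnit (u z) → ∀ p : H × N, Binv z (T z p) = p := by
    intro z hz p
    have h1 : T z p = u z (e p) := by
      show T z p = T z (e.symm (e p))
      rw [e.symm_apply_apply]
    show e.symm (Ring.inverse (u z) (T z p)) = p
    rw [h1, ← ContinuousLinearMap.mul_apply, Ring.inverse_mul_cancel _ hz,
      ContinuousLinearMap.one_apply, e.symm_apply_apply]
  -- blocks
  set Bα : ℂ → H →L[ℂ] H := fun z =>
    (ContinuousLinearMap.fst ℂ H N).comp ((Binv z).comp (ContinuousLinearMap.inl ℂ H K))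
    with hBα
  set Bβ : ℂ → K →L[ℂ] H := fun z =>
    (ContinuousLinearMap.fst ℂ H N).comp ((Binv z).comp (ContinuousLinearMap.inr ℂ H K))
    with hBβ
  set Bγ : ℂ → H →L[ℂ] N := fun z =>
    (ContinuousLinearMap.snd ℂ H N).comp ((Binv z).comp (ContinuousLinearMap.inl ℂ H K))
    with hBγ
  set Bδ : ℂ → K →L[ℂ] N := fun z =>
    (ContinuousLinearMap.snd ℂ H N).comp ((Binv z).comp (ContinuousLinearMap.inr ℂ H K))
    with hBδ
  have hBαan : AnalyticAt ℂ Bα z₁ := myclm_comp analyticAt_const (myclm_comp hBinvan analyticAt_const)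
  have hBβan : AnalyticAt ℂ Bβ z₁ := myclm_comp analyticAt_const (myclm_comp hBinvan analyticAt_const)
  have hBγan : AnalyticAt ℂ Bγ z₁ := myclm_comp analyticAt_const (myclm_comp hBinvan analyticAt_const)
  have hBδan : AnalyticAt ℂ Bδ z₁ := myclm_comp analyticAt_const (myclm_comp hBinvan analyticAt_const)
  have hBdecomp : ∀ z (q : H × K), Binv z q = (Bα z q.1 + Bβ z q.2, Bγ z q.1 + Bδ z q.2) := by
    intro z q
    have hq : Binv z q = Binv z ((q.1, (0 : K)) + ((0 : H), q.2)) := by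
      congr 1
      simp [Prod.ext_iff]
    rw [hq, map_add]
    have h1 : Binv z (q.1, (0 : K)) = (Bα z q.1, Bγ z q.1) := rfl
    have h2 : Binv z ((0 : H), q.2) = (Bβ z q.2, Bδ z q.2) := rfl
    rw [h1, h2, Prod.mk_add_mk]
  -- the four relations
  have R12 : ∀ z, IsUnit (u z) → ∀ (x : H) (n : N),
      Bα z (A z x + ↑n) + Bβ z (π x) = x ∧ Bγ z (A z x + ↑n) + Bδ z (π x) = n := by
    intro z hz x n
    have := hBT z hz (x, n)
    rw [hTapply, hBdecomp] at this
    rw [Prod.mk.injEq] at this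
    exact this
  have R34 : ∀ z, IsUnit (u z) → ∀ (y : H) (k : K),
      A z (Bα z y + Bβ z k) + ↑(Bγ z y + Bδ z k) = y ∧ π (Bα z y + Bβ z k) = k := by
    intro z hz y k
    have := hTB z hz (y, k)
    rw [hBdecomp] at this
    rw [hTapply, Prod.mk.injEq] at this
    exact this
  -- forward: A z bijective → Bδ z bijective
  have hforward : ∀ z, IsUnit (u z) → Function.Bijective (A z) →
      Function.Bijective (Bδ z) := by
    intro z hz hb
    constructor
    · rw [injective_iff_map_eq_zero]
      intro k hk
      have h3 := (R34 z hz 0 k).1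
      have h4 := (R34 z hz 0 k).2
      simp only [map_zero, zero_add, hk, Submodule.coe_zero, add_zero] at h3
      have hβ0 : Bβ z k = 0 := by
        apply hb.1
        rw [h3, map_zero]
      simp only [map_zero, zero_add, hβ0] at h4
      exact h4.symm
    · intro n
      obtain ⟨x, hx⟩ := hb.2 (-(n : H))
      refine ⟨π x, ?_⟩
      have h2 := (R12 z hz x n).2
      rw [hx] at h2
      rw [neg_add_cancel, map_zero, zero_add] at h2
      exact h2

  -- backward: a two-sided inverse of Bδ z yields invertibility of A z
  have hbackward : ∀ z, IsUnit (u z) → ∀ δ' : N →L[ℂ] K,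
      (∀ n, Bδ z (δ' n) = n) → (∀ k, δ' (Bδ z k) = k) →
      Function.Bijective (A z) ∧
        Ring.inverse (A z) = Bα z - (Bβ z).comp (δ'.comp (Bγ z)) := by
    intro z hz δ' h1 h2
    set C : H →L[ℂ] H := Bα z - (Bβ z).comp (δ'.comp (Bγ z)) with hC
    have hCapply : ∀ y, C y = Bα z y - Bβ z (δ' (Bγ z y)) := by
      intro y
      rw [hC]
      simp only [ContinuousLinearMap.sub_apply, ContinuousLinearMap.comp_apply]
    have hAC : ∀ y, A z (C y) = y := by
      intro y
      have h3 := (R34 z hz y (-(δ' (Bγ z y)))).1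
      simp only [map_neg, h1, add_neg_cancel, Submodule.coe_zero, add_zero] at h3
      rw [hCapply, sub_eq_add_neg]
      exact h3
    have hCA : ∀ x, C (A z x) = x := by
      intro x
      have h5 := (R12 z hz x 0).1
      have h6 := (R12 z hz x 0).2
      simp only [Submodule.coe_zero, add_zero] at h5 h6
      have h6' : δ' (Bγ z (A z x)) + π x = 0 := by
        have := congrArg δ' h6
        rwa [map_add, h2, map_zero] at this
      have hπx : π x = -δ' (Bγ z (A z x)) := by
        have := eq_neg_of_add_eq_zero_right h6'
        exact this
      rw [hCapply, sub_eq_add_neg, ← map_neg (Bβ z), ← hπx]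
      exact h5
    have hu1' : A z * C = 1 := by
      apply ContinuousLinearMap.ext
      intro y
      simp only [ContinuousLinearMap.mul_apply, ContinuousLinearMap.one_apply]
      exact hAC y
    have hu2' : C * A z = 1 := by
      apply ContinuousLinearMap.ext
      intro x
      simp only [ContinuousLinearMap.mul_apply, ContinuousLinearMap.one_apply]
      exact hCA x
    have hunit : IsUnit (A z) := ⟨⟨A z, C, hu1', hu2'⟩, rfl⟩
    refine ⟨my_isUnit_iff_bijective.mp hunit, ?_⟩
    exact Ring.inverse_unit ⟨A z, C, hu1', hu2'⟩
  -- finite-dimensional reduction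
  by_cases hrank : Module.finrank ℂ K = Module.finrank ℂ N
  · obtain ⟨φ⟩ := FiniteDimensional.nonempty_linearEquiv_of_finrank_eq hrank
    set φL : K →L[ℂ] N := LinearMap.toContinuousLinearMap (φ : K →ₗ[ℂ] N) with hφL
    set φiL : N →L[ℂ] K := LinearMap.toContinuousLinearMap (φ.symm : N →ₗ[ℂ] K) with hφiL
    set g : ℂ → K →L[ℂ] K := fun z => φiL.comp (Bδ z) with hg
    have hgan : AnalyticAt ℂ g z₁ := myclm_comp analyticAt_const hBδan
    set b := Module.finBasis ℂ K with hb
    set m : ℂ → Matrix (Fin (Module.finrank ℂ K)) (Fin (Module.finrank ℂ K)) ℂ :=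
      fun z => LinearMap.toMatrixAlgEquiv b ((g z : K →ₗ[ℂ] K)) with hm
    have hmen : ∀ i j, AnalyticAt ℂ (fun z => m z i j) z₁ := by
      intro i j
      have hrw : (fun z => m z i j)
          = fun z => (LinearMap.toContinuousLinearMap (b.coord i)) ((g z) (b j)) := by
        funext z
        show LinearMap.toMatrixAlgEquiv b ((g z : K →ₗ[ℂ] K)) i j = _
        rw [LinearMap.toMatrixAlgEquiv_apply]
        rfl
      rw [hrw]
      exact mycomp_clm (LinearMap.toContinuousLinearMap (b.coord i)) (myclm_apply hgan (b j))
    set f : ℂ → ℂ := fun z => (m z).det with hfdef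
    have hfan : AnalyticAt ℂ f z₁ := my_analyticAt_det hmen
    have hδφ : ∀ z (k : K), Bδ z k = φL (g z k) := by
      intro z k
      show Bδ z k = φ (φ.symm (Bδ z k))
      rw [φ.apply_symm_apply]
    set Ψ : Matrix (Fin (Module.finrank ℂ K)) (Fin (Module.finrank ℂ K)) ℂ →ₗ[ℂ] (K →L[ℂ] K) :=
      (LinearMap.toContinuousLinearMap :
        (K →ₗ[ℂ] K) ≃ₗ[ℂ] (K →L[ℂ] K)).toLinearMap.comp
        (Matrix.toLinAlgEquiv b).toLinearMap with hΨ
    set adjC : ℂ → K →L[ℂ] K := fun z => Ψ (Matrix.adjugate (m z)) with hadjC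
    have hΨapp : ∀ (M : Matrix (Fin (Module.finrank ℂ K)) (Fin (Module.finrank ℂ K)) ℂ) (v : K),
        Ψ M v = Matrix.toLinAlgEquiv b M v := by
      intro M v
      rfl
    have hgzlin : ∀ z, (g z : K →ₗ[ℂ] K) = Matrix.toLinAlgEquiv b (m z) := by
      intro z
      rw [hm, Matrix.toLinAlgEquiv_toMatrixAlgEquiv]
    have hkey1 : ∀ z (v : K), g z (adjC z v) = f z • v := by
      intro z v
      have e1 : (g z : K →ₗ[ℂ] K) * Matrix.toLinAlgEquiv b (Matrix.adjugate (m z))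
          = f z • (1 : K →ₗ[ℂ] K) := by
        rw [hgzlin, ← map_mul, Matrix.mul_adjugate]
        rw [map_smul, map_one]
      have e2 : ((g z : K →ₗ[ℂ] K) * Matrix.toLinAlgEquiv b (Matrix.adjugate (m z))) v
          = g z (adjC z v) := by
        rw [Module.End.mul_apply]
        rfl
      rw [← e2, e1, LinearMap.smul_apply, Module.End.one_apply]
    have hkey2 : ∀ z (v : K), adjC z (g z v) = f z • v := by
      intro z v
      have e1 : Matrix.toLinAlgEquiv b (Matrix.adjugate (m z)) * (g z : K →ₗ[ℂ] K)
          = f z • (1 : K →ₗ[ℂ] K) := by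
        rw [hgzlin, ← map_mul, Matrix.adjugate_mul]
        rw [map_smul, map_one]
      have e2 : (Matrix.toLinAlgEquiv b (Matrix.adjugate (m z)) * (g z : K →ₗ[ℂ] K)) v
          = adjC z (g z v) := by
        rw [Module.End.mul_apply]
        rfl
      rw [← e2, e1, LinearMap.smul_apply, Module.End.one_apply]
    rcases hfan.eventually_eq_zero_or_eventually_ne_zero with hcase | hcase
    · left
      filter_upwards [hevunit, hcase] with z hz hz0
      intro hbij
      have hδbij := hforward z hz hbij
      have hgbij : Function.Bijective (g z) := by
        have hco : ⇑(g z) = ⇑(φ.symm) ∘ ⇑(Bδ z) := rfl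
        rw [hco]
        exact φ.symm.bijective.comp hδbij
      have hunitEnd : IsUnit ((g z : K →ₗ[ℂ] K)) := (Module.End.isUnit_iff _).mpr hgbij
      have hunitm : IsUnit (m z) := by
        rw [hm]
        exact hunitEnd.map (LinearMap.toMatrixAlgEquiv b)
      exact ((Matrix.isUnit_iff_isUnit_det _).mp hunitm).ne_zero hz0
    · right
      have hEx : ∀ z, IsUnit (u z) → f z ≠ 0 → Function.Bijective (A z) ∧
          Ring.inverse (A z)
            = Bα z - (Bβ z).comp (((((f z)⁻¹ • adjC z).comp φiL)).comp (Bγ z)) := by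
        intro z hz hz0
        have h1 : ∀ n, Bδ z ((((f z)⁻¹ • adjC z).comp φiL) n) = n := by
          intro n
          rw [hδφ z]
          have e3 : (((f z)⁻¹ • adjC z).comp φiL) n = (f z)⁻¹ • adjC z (φiL n) := rfl
          rw [e3, map_smul, hkey1, smul_smul, inv_mul_cancel₀ hz0, one_smul]
          show φ (φ.symm n) = n
          exact φ.apply_symm_apply n
        have h2 : ∀ k, (((f z)⁻¹ • adjC z).comp φiL) (Bδ z k) = k := by
          intro k
          have e4 : (((f z)⁻¹ • adjC z).comp φiL) (Bδ z k) = (f z)⁻¹ • adjC z (g z k) := rfl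
          rw [e4, hkey2, smul_smul, inv_mul_cancel₀ hz0, one_smul]
        exact hbackward z hz _ h1 h2
      have h1' : ∀ᶠ z in nhdsWithin z₁ {z₁}ᶜ, IsUnit (u z) :=
        hevunit.filter_mono nhdsWithin_le_nhds
      constructor
      · filter_upwards [h1', hcase] with z hz hz0
        exact (hEx z hz hz0).1
      · -- meromorphy
        have hadjen : ∀ i j, AnalyticAt ℂ (fun z => Matrix.adjugate (m z) i j) z₁ := by
          intro i j
          have hrw : (fun z => Matrix.adjugate (m z) i j)
              = fun z => ((m z).updateRow j (Pi.single i 1)).det := by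
            funext z
            rw [Matrix.adjugate_apply]
          rw [hrw]
          apply my_analyticAt_det
          intro a c
          by_cases hac : a = j
          · simp only [Matrix.updateRow_apply, if_pos hac]
            exact analyticAt_const
          · simp only [Matrix.updateRow_apply, if_neg hac]
            exact hmen a c
        have hterm : ∀ (i j : Fin (Module.finrank ℂ K)) (c : ℂ),
            Ψ (Matrix.single i j c) = c • Ψ (Matrix.single i j 1) := by
          intro i j c
          rw [← map_smul]
          congr 1
          rw [Matrix.smul_single, smul_eq_mul, mul_one]
        have hadjCan : AnalyticAt ℂ adjC z₁ := by
          have hrepr : adjC = fun z => ∑ i, ∑ j,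
              Matrix.adjugate (m z) i j • Ψ (Matrix.single i j 1) := by
            funext z
            show Ψ (Matrix.adjugate (m z)) = _
            conv_lhs => rw [Matrix.matrix_eq_sum_single (Matrix.adjugate (m z))]
            rw [map_sum]
            refine Finset.sum_congr rfl fun i _ => ?_
            rw [map_sum]
            refine Finset.sum_congr rfl fun j _ => ?_
            exact hterm i j _
          rw [hrepr]
          apply Finset.analyticAt_fun_sum
          intro i _
          apply Finset.analyticAt_fun_sum
          intro j _
          exact mycomp_clm (ContinuousLinearMap.smulRight (1 : ℂ →L[ℂ] ℂ) (Ψ (Matrix.single i j 1))) (hadjen i j)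
        have hGan : AnalyticAt ℂ
            (fun z => (Bβ z).comp ((adjC z).comp (φiL.comp (Bγ z)))) z₁ := by
          apply myclm_comp hBβan
          exact myclm_comp hadjCan (myclm_comp analyticAt_const hBγan)
        have hVmero : MeromorphicAt
            (fun z => Bα z - (f z)⁻¹ •
              ((Bβ z).comp ((adjC z).comp (φiL.comp (Bγ z))))) z₁ := by
          have hm1 : MeromorphicAt
              (fun z => (f z)⁻¹ • ((Bβ z).comp ((adjC z).comp (φiL.comp (Bγ z))))) z₁ :=
            (hfan.meromorphicAt.inv).smul hGan.meromorphicAt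
          exact hBαan.meromorphicAt.sub hm1
        apply hVmero.congr
        filter_upwards [h1', hcase] with z hz hz0
        rw [(hEx z hz hz0).2]
        apply ContinuousLinearMap.ext
        intro x
        simp only [ContinuousLinearMap.sub_apply, ContinuousLinearMap.smul_apply,
          ContinuousLinearMap.comp_apply, map_smul]
  · left
    filter_upwards [hevunit] with z hz
    intro hbij
    have hδbij := hforward z hz hbij
    have : Module.finrank ℂ K = Module.finrank ℂ N :=
      (LinearEquiv.ofBijective ((Bδ z : K →ₗ[ℂ] N)) hδbij).finrank_eq
    exact hrank this

end local_lemma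


/-- Analytic Fredholm theory: if `A : Ω → L(H,H)` is an analytic family of Fredholm
operators on a connected open set `Ω ⊆ ℂ` and `A(z₀)` is bijective at some `z₀ ∈ Ω`,
then the set of points where `A(z)` fails to be bijective is discrete in `Ω` and
`z ↦ A(z)⁻¹` is meromorphic on `Ω`. -/
theorem stmt_10
    {H : Type*} [NormedAddCommGroup H] [NormedSpace ℂ H] [CompleteSpace H]
    (Ω : Set ℂ) (hΩ : IsOpen Ω) (hconn : IsPreconnected Ω)
    (A : ℂ → H →L[ℂ] H) (hA : AnalyticOnNhd ℂ A Ω)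
    (hker : ∀ z ∈ Ω, FiniteDimensional ℂ (LinearMap.ker (A z : H →ₗ[ℂ] H)))
    (hcoker : ∀ z ∈ Ω, FiniteDimensional ℂ (H ⧸ LinearMap.range (A z : H →ₗ[ℂ] H)))
    (z₀ : ℂ) (hz₀ : z₀ ∈ Ω) (hbij : Function.Bijective (A z₀)) :
    (∀ z ∈ Ω, ∀ᶠ w in nhdsWithin z {z}ᶜ, Function.Bijective (A w)) ∧
    MeromorphicOn (fun z => Ring.inverse (A z)) Ω := by
  classical
  have hnebot : ∀ z : ℂ, (nhdsWithin z {z}ᶜ).NeBot := fun z => by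
    exact Module.punctured_nhds_neBot ℂ ℂ z
  set uS : Set ℂ := {z | z ∈ Ω ∧ ∀ᶠ w in nhdsWithin z {z}ᶜ, Function.Bijective (A w)} with huS
  set vS : Set ℂ := {z | z ∈ Ω ∧ ∀ᶠ w in nhds z, ¬ Function.Bijective (A w)} with hvS
  have hopen_bij : ∀ w, w ∈ Ω → Function.Bijective (A w) →
      ∀ᶠ ζ in nhds w, Function.Bijective (A ζ) := by
    intro w hw hbw
    have hcont : ContinuousAt A w := (hA w hw).continuousAt
    have hmem : {B : H →L[ℂ] H | IsUnit B} ∈ nhds (A w) :=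
      (Units.isOpen (R := H →L[ℂ] H)).mem_nhds (my_isUnit_iff_bijective.mpr hbw)
    filter_upwards [hcont.preimage_mem_nhds hmem] with ζ hζ
    exact my_isUnit_iff_bijective.mp hζ
  have huopen : IsOpen uS := by
    rw [isOpen_iff_mem_nhds]
    rintro z ⟨hzΩ, hz⟩
    have h1 : ∀ᶠ w in nhds z, w = z ∨ Function.Bijective (A w) := by
      have h2 := eventually_nhdsWithin_iff.mp hz
      filter_upwards [h2] with w hw
      rcases eq_or_ne w z with h | h
      · exact Or.inl h
      · exact Or.inr (hw (by simpa using h))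
    filter_upwards [hΩ.mem_nhds hzΩ, h1] with w hwΩ hw
    refine ⟨hwΩ, ?_⟩
    rcases hw with rfl | hbw
    · exact hz
    · exact Filter.Eventually.filter_mono nhdsWithin_le_nhds (hopen_bij w hwΩ hbw)
  have hvopen : IsOpen vS := by
    rw [isOpen_iff_mem_nhds]
    rintro z ⟨hzΩ, hz⟩
    filter_upwards [hΩ.mem_nhds hzΩ, hz.eventually_nhds] with w hwΩ hw
    exact ⟨hwΩ, hw⟩
  have hdisj : ∀ z, z ∈ uS → z ∈ vS → False := by
    intro z h1 h2
    haveI := hnebot z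
    obtain ⟨w, hw1, hw2⟩ :=
      (h1.2.and (Filter.Eventually.filter_mono nhdsWithin_le_nhds h2.2)).exists
    exact hw2 hw1
  have hcover : ∀ z ∈ Ω, z ∈ uS ∪ vS := by
    intro z hz
    rcases localFredholm A z (hA z hz) (hker z hz) (hcoker z hz) with h | h
    · exact Or.inr ⟨hz, h⟩
    · exact Or.inl ⟨hz, h.1⟩
  have hz₀u : z₀ ∈ uS :=
    ⟨hz₀, Filter.Eventually.filter_mono nhdsWithin_le_nhds (hopen_bij z₀ hz₀ hbij)⟩
  have hvempty : Ω ∩ vS = ∅ := by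
    by_contra hne
    have hnon : (Ω ∩ vS).Nonempty := Set.nonempty_iff_ne_empty.mpr hne
    obtain ⟨z, _, hzu, hzv⟩ :=
      hconn uS vS huopen hvopen (fun z hz => hcover z hz) ⟨z₀, hz₀, hz₀u⟩ hnon
    exact hdisj z hzu hzv
  have hU : ∀ z ∈ Ω, ∀ᶠ w in nhdsWithin z {z}ᶜ, Function.Bijective (A w) := by
    intro z hz
    rcases hcover z hz with h | h
    · exact h.2
    · exfalso
      have hmem : z ∈ Ω ∩ vS := ⟨hz, h⟩
      rw [hvempty] at hmem
      exact hmem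
  refine ⟨hU, ?_⟩
  intro z hz
  rcases localFredholm A z (hA z hz) (hker z hz) (hcoker z hz) with h | h
  · exfalso
    haveI := hnebot z
    obtain ⟨w, hw1, hw2⟩ :=
      ((hU z hz).and (Filter.Eventually.filter_mono nhdsWithin_le_nhds h)).exists
    exact hw2 hw1
  · exact h.2
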